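/- Corollary A′: suppose f on a finite product space satisfies the covering bound: the set {∇f(x,·) : x ∈ ∏Kᵢ} can be covered by at most e^{εn} sets of sup-norm diameter < δn. Then there exist a partition 𝒫 of ∏ᵢKᵢ with |𝒫| ≤ e^{εn} and additively separable functions g_P for P ∈ 𝒫 such that Σ_P μ(P)·D(μ|_P ‖ ξ_{g_P}) < (ε+δ)n, where μ is the Gibbs measure of f and ξ_{g_P} is the product Gibbs measure of g_P. -/

import Mathlib

open Real Finset

/-- A probability mass function on a finite type. -/
def IsPMF {α : Type*} [Fintype α] (μ : α → ℝ) : Prop :=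
  (∀ x, 0 ≤ μ x) ∧ ∑ x, μ x = 1

/-- Kullback–Leibler divergence. -/
noncomputable def KL {α : Type*} [Fintype α] (μ γ : α → ℝ) : ℝ :=
  ∑ x, μ x * Real.log (μ x / γ x)

/-- The Gibbs measure of the potential `f` relative to the reference measure `l`. -/
noncomputable def gibbs {α : Type*} [Fintype α] (f : α → ℝ) (l : α → ℝ) : α → ℝ :=
  fun x => Real.exp (f x) * l x / ∑ y, Real.exp (f y) * l y

/-- Product of the measures `l i` on the product space. -/
noncomputable def prodMeas {n : ℕ} {K : Fin n → Type*} [∀ i, Fintype (K i)]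
    (l : ∀ i, K i → ℝ) : (∀ i, K i) → ℝ :=
  fun x => ∏ i, l i (x i)

/-- Discrete partial derivative `∂ᵢf(x,y)` with reference points `star`. -/
noncomputable def dpart {n : ℕ} {K : Fin n → Type*} (f : (∀ i, K i) → ℝ)
    (star : ∀ i, K i) (i : Fin n) (x : ∀ j, K j) (y : K i) : ℝ :=
  f (Function.update x i y) - f (Function.update x i (star i))

/-- Discrete gradient `∇f(x,y) = Σᵢ ∂ᵢf(x,yᵢ)` with reference points `star`. -/
noncomputable def dgrad {n : ℕ} {K : Fin n → Type*} (f : (∀ i, K i) → ℝ)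
    (star : ∀ i, K i) (x y : ∀ i, K i) : ℝ :=
  ∑ i, dpart f star i x (y i)

/-- The product Gibbs measure `ξ_{∇f(x,·)} = ∏ᵢ ξ_{∂ᵢf(x,·)}` of the additively
separable potential `∇f(x,·)`. -/
noncomputable def xiGrad {n : ℕ} {K : Fin n → Type*} [∀ i, Fintype (K i)]
    (f : (∀ i, K i) → ℝ) (star : ∀ i, K i) (l : ∀ i, K i → ℝ) (x : ∀ i, K i) :
    (∀ i, K i) → ℝ :=
  fun y => ∏ i, gibbs (dpart f star i x) (l i) (y i)

/-- Mass of the cell labelled `j` of the partition given by the labelling `c`. -/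
noncomputable def cellMass {α : Type*} [Fintype α] {I : Type*} [Fintype I] [DecidableEq I]
    (μ : α → ℝ) (c : α → I) (j : I) : ℝ :=
  ∑ x, if c x = j then μ x else 0

/-- The measure `μ` conditioned on the cell labelled `j`. -/
noncomputable def condMeas {α : Type*} [Fintype α] {I : Type*} [Fintype I] [DecidableEq I]
    (μ : α → ℝ) (c : α → I) (j : I) : α → ℝ :=
  fun x => if c x = j then μ x / cellMass μ c j else 0

/-- Shannon entropy of the partition given by the labelling `c`, under `μ`. -/
noncomputable def partEnt {α : Type*} [Fintype α] {I : Type*} [Fintype I] [DecidableEq I]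
    (μ : α → ℝ) (c : α → I) : ℝ :=
  -∑ j, cellMass μ c j * Real.log (cellMass μ c j)


namespace CorollaryAAux

open scoped Classical

variable {n : ℕ} {K : Fin n → Type*} [∀ i, Fintype (K i)]

/-- `p - q ≤ p log (p/q)` for `p ≥ 0`, `q > 0`. -/
lemma sub_le_mul_log {p q : ℝ} (hp : 0 ≤ p) (hq : 0 < q) :
    p - q ≤ p * Real.log (p / q) := by
  rcases hp.eq_or_lt with h | h
  · simp [← h, hq.le]
  · have h1 : Real.log (q / p) ≤ q / p - 1 :=
      Real.log_le_sub_one_of_pos (by positivity)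
    have h2 : Real.log (p / q) = - Real.log (q / p) := by
      rw [← Real.log_inv]; congr 1; field_simp
    have h3 : p * Real.log (q / p) ≤ p * (q / p - 1) :=
      mul_le_mul_of_nonneg_left h1 h.le
    have h4 : p * (q / p - 1) = q - p := by field_simp
    rw [h2]
    nlinarith

/-- Partial "collapse" sum: sum of `ν` over all points agreeing with `x`
outside `S`. -/
noncomputable def Usum (ν : (∀ i, K i) → ℝ) (S : Finset (Fin n)) (x : ∀ i, K i) : ℝ :=
  ∑ y, if ∀ j, j ∉ S → y j = x j then ν y else 0

lemma Usum_empty (ν : (∀ i, K i) → ℝ) (x : ∀ i, K i) : Usum ν ∅ x = ν x := by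
  unfold Usum
  have h : ∀ y : ∀ i, K i, (∀ j, j ∉ (∅ : Finset (Fin n)) → y j = x j) ↔ y = x := by
    intro y
    constructor
    · intro h; exact funext fun j => h j (by simp)
    · rintro rfl j _; rfl
  calc (∑ y, if ∀ j, j ∉ (∅ : Finset (Fin n)) → y j = x j then ν y else 0)
      = ∑ y, if y = x then ν y else 0 := by
        refine Finset.sum_congr rfl fun y _ => ?_
        simp only [h y]
    _ = ν x := by simp

lemma Usum_univ (ν : (∀ i, K i) → ℝ) (x : ∀ i, K i) :
    Usum ν univ x = ∑ y, ν y := by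
  unfold Usum
  refine Finset.sum_congr rfl fun y _ => ?_
  simp

lemma Usum_pos {ν : (∀ i, K i) → ℝ} (hν : ∀ x, 0 < ν x) (S : Finset (Fin n))
    (x : ∀ i, K i) : 0 < Usum ν S x := by
  unfold Usum
  refine Finset.sum_pos' (fun y _ => ?_) ⟨x, mem_univ x, ?_⟩
  · split_ifs with h
    · exact (hν y).le
    · exact le_rfl
  · have hcond : ∀ j, j ∉ S → x j = x j := fun j _ => rfl
    rw [if_pos hcond]; exact hν x

lemma Usum_update_mem {ν : (∀ i, K i) → ℝ} {S : Finset (Fin n)} {i : Fin n}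
    (hiS : i ∈ S) (x : ∀ i, K i) (v : K i) :
    Usum ν S (Function.update x i v) = Usum ν S x := by
  unfold Usum
  refine Finset.sum_congr rfl fun y _ => ?_
  have h : (∀ j, j ∉ S → y j = Function.update x i v j) ↔ (∀ j, j ∉ S → y j = x j) := by
    constructor
    · intro h j hj
      have hji : j ≠ i := fun e => hj (e ▸ hiS)
      have := h j hj
      rwa [Function.update_of_ne hji] at this
    · intro h j hj
      have hji : j ≠ i := fun e => hj (e ▸ hiS)
      rw [Function.update_of_ne hji]
      exact h j hj
  simp only [h]

lemma Usum_insert {ν : (∀ i, K i) → ℝ} {S : Finset (Fin n)} {i : Fin n}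
    (hiS : i ∉ S) (x : ∀ i, K i) :
    Usum ν (insert i S) x = ∑ v, Usum ν S (Function.update x i v) := by
  unfold Usum
  rw [Finset.sum_comm]
  refine Finset.sum_congr rfl fun y _ => ?_
  symm
  have key : ∀ v : K i, (∀ j, j ∉ S → y j = Function.update x i v j) ↔
      (v = y i ∧ ∀ j, j ∉ insert i S → y j = x j) := by
    intro v
    constructor
    · intro h
      constructor
      · have := h i hiS
        rw [Function.update_self] at this
        exact this.symm
      · intro j hj
        have hjS : j ∉ S := fun hh => hj (mem_insert_of_mem hh)
        have hji : j ≠ i := fun e => hj (e ▸ mem_insert_self i S)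
        have := h j hjS
        rwa [Function.update_of_ne hji] at this
    · rintro ⟨rfl, h⟩ j hj
      by_cases hji : j = i
      · subst hji; rw [Function.update_self]
      · rw [Function.update_of_ne hji]
        exact h j (by simp [hji, hj])
  calc (∑ v : K i, if ∀ j, j ∉ S → y j = Function.update x i v j then ν y else 0)
      = ∑ v : K i, if v = y i ∧ ∀ j, j ∉ insert i S → y j = x j then ν y else 0 := by
        refine Finset.sum_congr rfl fun v _ => ?_
        simp only [key v]
    _ = if ∀ j, j ∉ insert i S → y j = x j then ν y else 0 := by
        by_cases hP : ∀ j, j ∉ insert i S → y j = x j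
        · rw [if_pos hP]
          have hiff : ∀ v : K i, (v = y i ∧ ∀ j, j ∉ insert i S → y j = x j) ↔ v = y i :=
            fun v => ⟨fun h => h.1, fun h => ⟨h, hP⟩⟩
          calc (∑ v : K i, if v = y i ∧ ∀ j, j ∉ insert i S → y j = x j then ν y else 0)
              = ∑ v : K i, if v = y i then ν y else 0 := by
                refine Finset.sum_congr rfl fun v _ => ?_
                simp only [hiff v]
            _ = ν y := by simp
        · rw [if_neg hP]
          refine Finset.sum_eq_zero fun v _ => ?_
          rw [if_neg]
          rintro ⟨-, h⟩
          exact hP h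

lemma Usum_single {ν : (∀ i, K i) → ℝ} (i : Fin n) (x : ∀ i, K i) :
    Usum ν {i} x = ∑ v, ν (Function.update x i v) := by
  have h : ({i} : Finset (Fin n)) = insert i ∅ := rfl
  rw [h, Usum_insert (notMem_empty i)]
  refine Finset.sum_congr rfl fun v _ => Usum_empty ν _

/-- The key exact identity ("CS"): summing `U_{i} · U_S / U_{S∪i}` recovers the
total mass. -/
lemma Usum_cs {ν : (∀ i, K i) → ℝ} (hν : ∀ x, 0 < ν x) {S : Finset (Fin n)}
    {i : Fin n} (hiS : i ∉ S) :
    ∑ x, Usum ν {i} x * Usum ν S x / Usum ν (insert i S) x = ∑ x, ν x := by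
  have hstep1 : ∑ x, Usum ν {i} x * Usum ν S x / Usum ν (insert i S) x
      = ∑ p : (∀ i, K i) × K i,
          ν (Function.update p.1 i p.2) * Usum ν S p.1 / Usum ν (insert i S) p.1 := by
    rw [Fintype.sum_prod_type]
    refine Finset.sum_congr rfl fun x _ => ?_
    rw [Usum_single, Finset.sum_mul, Finset.sum_div]
  set e : (∀ i, K i) × K i → (∀ i, K i) × K i :=
    fun p => (Function.update p.1 i p.2, p.1 i) with he_def
  have he : Function.Involutive e := by
    intro p
    rw [he_def]
    simp only [Function.update_self, Function.update_idem, Function.update_eq_self]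
  have hstep2 : ∑ p : (∀ i, K i) × K i,
        ν (Function.update p.1 i p.2) * Usum ν S p.1 / Usum ν (insert i S) p.1
      = ∑ p : (∀ i, K i) × K i,
          ν p.1 * Usum ν S (Function.update p.1 i p.2) /
            Usum ν (insert i S) p.1 := by
    refine Fintype.sum_bijective e he.bijective _ _ fun p => ?_
    rw [he_def]
    simp only []
    rw [Function.update_idem, Function.update_eq_self,
      Usum_update_mem (mem_insert_self i S)]
  rw [hstep1, hstep2, Fintype.sum_prod_type]
  refine Finset.sum_congr rfl fun x _ => ?_
  have hden : Usum ν (insert i S) x ≠ 0 := (Usum_pos hν _ x).ne'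
  calc (∑ v : K i, ν x * Usum ν S (Function.update x i v) / Usum ν (insert i S) x)
      = ν x * (∑ v : K i, Usum ν S (Function.update x i v)) / Usum ν (insert i S) x := by
        rw [Finset.mul_sum, Finset.sum_div]
    _ = ν x * Usum ν (insert i S) x / Usum ν (insert i S) x := by
        rw [← Usum_insert hiS]
    _ = ν x := by field_simp

/-- Superadditivity step, by induction on `S`. -/
lemma Usum_L [Nonempty (∀ i, K i)] {ν : (∀ i, K i) → ℝ} (hν : ∀ x, 0 < ν x)
    (S : Finset (Fin n)) :
    ∑ i ∈ S, ∑ x, ν x / (∑ y, ν y) * (Real.log (Usum ν {i} x) - Real.log (ν x))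
      ≤ ∑ x, ν x / (∑ y, ν y) * (Real.log (Usum ν S x) - Real.log (ν x)) := by
  have hZ : 0 < ∑ y, ν y := Finset.sum_pos (fun y _ => hν y) univ_nonempty
  have hμsum : ∑ x, ν x / (∑ y, ν y) = 1 := by
    rw [← Finset.sum_div, div_self hZ.ne']
  induction S using Finset.induction_on with
  | empty =>
    simp [Usum_empty]
  | @insert i S hiS ih =>
    rw [Finset.sum_insert hiS]
    have key : (∑ x, ν x / (∑ y, ν y) * (Real.log (Usum ν {i} x) - Real.log (ν x)))
        + ∑ x, ν x / (∑ y, ν y) * (Real.log (Usum ν S x) - Real.log (ν x))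
      ≤ ∑ x, ν x / (∑ y, ν y) * (Real.log (Usum ν (insert i S) x) - Real.log (ν x)) := by
      set A : (∀ i, K i) → ℝ := fun x =>
        Usum ν {i} x * Usum ν S x / (ν x * Usum ν (insert i S) x) with hA_def
      have hApos : ∀ x, 0 < A x := fun x => by
        rw [hA_def]
        have := Usum_pos hν ({i} : Finset (Fin n)) x
        have := Usum_pos hν S x
        have := Usum_pos hν (insert i S) x
        have := hν x
        positivity
      have hlogA : ∀ x : ∀ i, K i,
          Real.log (Usum ν {i} x) - Real.log (ν x)
            + (Real.log (Usum ν S x) - Real.log (ν x))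
            - (Real.log (Usum ν (insert i S) x) - Real.log (ν x))
          = Real.log (A x) := by
        intro x
        rw [hA_def]
        simp only []
        rw [Real.log_div (mul_pos (Usum_pos hν ({i} : Finset (Fin n)) x) (Usum_pos hν S x)).ne'
            (mul_pos (hν x) (Usum_pos hν (insert i S) x)).ne',
          Real.log_mul (Usum_pos hν _ x).ne' (Usum_pos hν S x).ne',
          Real.log_mul (hν x).ne' (Usum_pos hν _ x).ne']
        ring
      have hAsum : ∑ x, ν x / (∑ y, ν y) * A x = 1 := by
        have hterm : ∀ x : ∀ i, K i, ν x / (∑ y, ν y) * A x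
            = (Usum ν {i} x * Usum ν S x / Usum ν (insert i S) x) / (∑ y, ν y) := by
          intro x
          rw [hA_def]
          have h1 : (ν x) ≠ 0 := (hν x).ne'
          have h2 : Usum ν (insert i S) x ≠ 0 := (Usum_pos hν _ x).ne'
          field_simp
        rw [Finset.sum_congr rfl fun x _ => hterm x, ← Finset.sum_div,
          Usum_cs hν hiS, div_self hZ.ne']
      have hbound : ∑ x, ν x / (∑ y, ν y) * Real.log (A x) ≤ 0 := by
        have : ∑ x, ν x / (∑ y, ν y) * Real.log (A x)
            ≤ ∑ x, ν x / (∑ y, ν y) * (A x - 1) := by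
          refine Finset.sum_le_sum fun x _ => ?_
          refine mul_le_mul_of_nonneg_left ?_ (div_nonneg (hν x).le hZ.le)
          exact Real.log_le_sub_one_of_pos (hApos x)
        have heq : ∑ x, ν x / (∑ y, ν y) * (A x - 1)
            = (∑ x, ν x / (∑ y, ν y) * A x) - ∑ x, ν x / (∑ y, ν y) := by
          rw [← Finset.sum_sub_distrib]
          exact Finset.sum_congr rfl fun x _ => by ring
        rw [heq, hAsum, hμsum] at this
        linarith
      have hsplit : (∑ x, ν x / (∑ y, ν y) * (Real.log (Usum ν {i} x) - Real.log (ν x)))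
          + (∑ x, ν x / (∑ y, ν y) * (Real.log (Usum ν S x) - Real.log (ν x)))
          - (∑ x, ν x / (∑ y, ν y) * (Real.log (Usum ν (insert i S) x) - Real.log (ν x)))
          = ∑ x, ν x / (∑ y, ν y) * Real.log (A x) := by
        rw [← Finset.sum_add_distrib, ← Finset.sum_sub_distrib]
        refine Finset.sum_congr rfl fun x _ => ?_
        rw [← hlogA x]
        ring
      linarith
    linarith

/-- Relative Han inequality in Gibbs form. -/
lemma han [Nonempty (∀ i, K i)] {ν : (∀ i, K i) → ℝ} (hν : ∀ x, 0 < ν x) :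
    ∑ x, ν x / (∑ y, ν y) *
        (Real.log (ν x) + ∑ i, (Real.log (Usum ν {i} x) - Real.log (ν x)))
      ≤ Real.log (∑ y, ν y) := by
  have hZ : 0 < ∑ y, ν y := Finset.sum_pos (fun y _ => hν y) univ_nonempty
  have hμsum : ∑ x, ν x / (∑ y, ν y) = 1 := by
    rw [← Finset.sum_div, div_self hZ.ne']
  have hL := Usum_L hν (univ : Finset (Fin n))
  have hswap : ∑ i : Fin n, ∑ x, ν x / (∑ y, ν y) * (Real.log (Usum ν {i} x) - Real.log (ν x))
      = ∑ x, ν x / (∑ y, ν y) * (∑ i : Fin n, (Real.log (Usum ν {i} x) - Real.log (ν x))) := by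
    rw [Finset.sum_comm]
    exact Finset.sum_congr rfl fun x _ => by rw [Finset.mul_sum]
  rw [hswap] at hL
  have hRHS : ∑ x, ν x / (∑ y, ν y) * (Real.log (Usum ν univ x) - Real.log (ν x))
      = Real.log (∑ y, ν y) - ∑ x, ν x / (∑ y, ν y) * Real.log (ν x) := by
    have : ∀ x : ∀ i, K i, ν x / (∑ y, ν y) * (Real.log (Usum ν univ x) - Real.log (ν x))
        = ν x / (∑ y, ν y) * Real.log (∑ y, ν y) - ν x / (∑ y, ν y) * Real.log (ν x) := by
      intro x
      rw [Usum_univ]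
      ring
    rw [Finset.sum_congr rfl fun x _ => this x, Finset.sum_sub_distrib,
      ← Finset.sum_mul, hμsum, one_mul]
  rw [hRHS] at hL
  have hsplit : ∑ x, ν x / (∑ y, ν y) *
        (Real.log (ν x) + ∑ i, (Real.log (Usum ν {i} x) - Real.log (ν x)))
      = (∑ x, ν x / (∑ y, ν y) * Real.log (ν x))
        + ∑ x, ν x / (∑ y, ν y) * (∑ i : Fin n, (Real.log (Usum ν {i} x) - Real.log (ν x))) := by
    rw [← Finset.sum_add_distrib]
    exact Finset.sum_congr rfl fun x _ => by ring
  rw [hsplit]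
  linarith

end CorollaryAAux


open CorollaryAAux

/-- Corollary A′: if the set of discrete gradients of `f` can be covered by at most
`e^{εn}` sets of sup-norm diameter `< δn`, then there is a partition of the product
space into at most `e^{εn}` cells and additively separable functions `g_P`
(given by families `gᵢ : Kᵢ → ℝ`) with
`Σ_P μ(P) D(μ|_P ‖ ξ_{g_P}) < (ε+δ)n`. -/
theorem corollaryA' {n : ℕ} (hn : 0 < n) (K : Fin n → Type*)
    [∀ i, Fintype (K i)] [∀ i, Nonempty (K i)]
    (l : ∀ i, K i → ℝ) (hl : ∀ i, IsPMF (l i)) (hlpos : ∀ i x, 0 < l i x)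
    (star : ∀ i, K i) (f : (∀ i, K i) → ℝ)
    (ε δ : ℝ) (hε : 0 < ε) (hδ : 0 < δ)
    (hcov : ∃ (m : ℕ) (C : Fin m → Set ((∀ i, K i) → ℝ)),
      (m : ℝ) ≤ Real.exp (ε * n) ∧
      (∀ x : ∀ i, K i, ∃ j, dgrad f star x ∈ C j) ∧
      ∀ j, ∀ g ∈ C j, ∀ h ∈ C j, ∀ z, |g z - h z| < δ * n)
    (μ : (∀ i, K i) → ℝ) (hμ : μ = gibbs f (prodMeas l)) :
    ∃ (m : ℕ) (c : (∀ i, K i) → Fin m) (g : Fin m → ∀ i, K i → ℝ),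
      (m : ℝ) ≤ Real.exp (ε * n) ∧
      (∑ j, cellMass μ c j *
          KL (condMeas μ c j) (fun z => ∏ i, gibbs (g j i) (l i) (z i)))
        < (ε + δ) * n := by
  classical
  obtain ⟨m, C, hm, hcv, hdiam⟩ := hcov
  have hXne : Nonempty (∀ i, K i) := inferInstance
  obtain ⟨x₀⟩ := hXne
  have hm0 : 0 < m := by obtain ⟨j, -⟩ := hcv x₀; exact j.pos
  set c : (∀ i, K i) → Fin m := fun x => (hcv x).choose with hc_def
  have hc : ∀ x, dgrad f star x ∈ C (c x) := fun x => (hcv x).choose_spec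
  -- basic measures
  have hlam : ∀ x : ∀ i, K i, 0 < prodMeas l x :=
    fun x => Finset.prod_pos fun i _ => hlpos i (x i)
  set ν : (∀ i, K i) → ℝ := fun x => Real.exp (f x) * prodMeas l x with hν_def
  have hν : ∀ x, 0 < ν x := fun x => mul_pos (Real.exp_pos _) (hlam x)
  set Z : ℝ := ∑ y, ν y with hZ_def
  have hZ : 0 < Z := Finset.sum_pos (fun y _ => hν y) univ_nonempty
  have hμx : ∀ x, μ x = ν x / Z := by
    intro x
    rw [hμ]
    simp only [hZ_def, hν_def, gibbs]
  have hμpos : ∀ x, 0 < μ x := fun x => by rw [hμx x]; exact div_pos (hν x) hZ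
  have hμsum : ∑ x, μ x = 1 := by
    rw [Finset.sum_congr rfl fun x _ => hμx x, ← Finset.sum_div, ← hZ_def, div_self hZ.ne']
  -- normalizers of the product Gibbs measures
  set w : (∀ i, K i) → ℝ := fun x => ∏ i, ∑ u, Real.exp (dpart f star i x u) * l i u
    with hw_def
  have hwfac : ∀ (x : ∀ i, K i) (i : Fin n), 0 < ∑ u, Real.exp (dpart f star i x u) * l i u :=
    fun x i => Finset.sum_pos (fun u _ => mul_pos (Real.exp_pos _) (hlpos i u)) univ_nonempty
  have hw : ∀ x, 0 < w x := fun x => by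
    rw [hw_def]; exact Finset.prod_pos fun i _ => hwfac x i
  set ξ : (∀ i, K i) → (∀ i, K i) → ℝ :=
    fun x z => ∏ i, gibbs (dpart f star i x) (l i) (z i) with hξ_def
  have hξeq : ∀ x y, ξ x y = Real.exp (dgrad f star x y) * prodMeas l y / w x := by
    intro x y
    rw [hξ_def, hw_def]
    simp only [gibbs, dgrad, prodMeas]
    rw [Finset.prod_div_distrib, Finset.prod_mul_distrib, ← Real.exp_sum]
  have hξpos : ∀ x y, 0 < ξ x y := fun x y => by
    rw [hξeq]; exact div_pos (mul_pos (Real.exp_pos _) (hlam y)) (hw x)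
  -- the cells
  set P : Fin m → Finset (∀ i, K i) := fun j => Finset.univ.filter fun x => c x = j
    with hP_def
  have hPmem : ∀ (j : Fin m) (x : ∀ i, K i), x ∈ P j ↔ c x = j := by
    intro j x
    simp only [hP_def, Finset.mem_filter, Finset.mem_univ, true_and]
  have hMdef : ∀ j, cellMass μ c j = ∑ x ∈ P j, μ x := by
    intro j
    simp only [hP_def]
    rw [Finset.sum_filter]
    rfl
  have hMnn : ∀ j, 0 ≤ cellMass μ c j := fun j => by
    rw [hMdef]; exact Finset.sum_nonneg fun x _ => (hμpos x).le
  have hfib : ∀ F : (∀ i, K i) → ℝ, (∑ j, ∑ x ∈ P j, F x) = ∑ x, F x := by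
    intro F
    simp only [hP_def]
    exact Finset.sum_fiberwise_of_maps_to (fun x _ => Finset.mem_univ (c x)) F
  have hMsum : ∑ j, cellMass μ c j = 1 := by
    rw [Finset.sum_congr rfl fun j _ => hMdef j, hfib, hμsum]
  -- the within-cell gradient oscillation bound δ'
  set Q : Finset ((∀ i, K i) × (∀ i, K i)) :=
    Finset.univ.filter fun p => c p.1 = c p.2 with hQ_def
  have hQne : Q.Nonempty := ⟨(x₀, x₀), by simp [hQ_def]⟩
  obtain ⟨pm, hpmQ, hpmax⟩ := Finset.exists_max_image Q
    (fun p => dgrad f star p.2 p.2 - dgrad f star p.1 p.2) hQne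
  set δ' : ℝ := dgrad f star pm.2 pm.2 - dgrad f star pm.1 pm.2 with hδ'_def
  have hδ'lt : δ' < δ * n := by
    have hcc : c pm.1 = c pm.2 := by
      have := hpmQ
      simp only [hQ_def, Finset.mem_filter, Finset.mem_univ, true_and] at this
      exact this
    have h2 : dgrad f star pm.2 ∈ C (c pm.1) := by rw [hcc]; exact hc pm.2
    have h := hdiam (c pm.1) _ h2 _ (hc pm.1) pm.2
    calc δ' ≤ |dgrad f star pm.2 pm.2 - dgrad f star pm.1 pm.2| := le_abs_self _
      _ < δ * n := h
  have hpair : ∀ x y : ∀ i, K i, c x = c y →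
      dgrad f star y y - dgrad f star x y ≤ δ' :=
    fun x y hxy => hpmax (x, y) (by simp [hQ_def, hxy])
  -- the KL formula on a nonempty cell
  have hKLform : ∀ (j : Fin m) (x : ∀ i, K i), (P j).Nonempty →
      KL (condMeas μ c j) (ξ x)
        = (∑ y ∈ P j, μ y * (f y - dgrad f star x y)) / cellMass μ c j
          + (Real.log (w x) - Real.log Z - Real.log (cellMass μ c j)) := by
    intro j x hne
    have hM : 0 < cellMass μ c j := by
      rw [hMdef]; exact Finset.sum_pos (fun y _ => hμpos y) hne
    have hterm : ∀ y : ∀ i, K i,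
        condMeas μ c j y * Real.log (condMeas μ c j y / ξ x y)
          = if c y = j then
              μ y * ((f y - dgrad f star x y)
                + (Real.log (w x) - Real.log Z - Real.log (cellMass μ c j)))
                / cellMass μ c j
            else 0 := by
      intro y
      simp only [condMeas]
      split_ifs with hy
      · have hratio : μ y / cellMass μ c j / ξ x y
            = Real.exp (f y - dgrad f star x y) * (w x / (Z * cellMass μ c j)) := by
          rw [hξeq x y, hμx y, Real.exp_sub]
          simp only [hν_def]
          have h1 := (hlam y).ne'
          have h2 := (hw x).ne'
          have h3 := hZ.ne'
          have h4 := hM.ne'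
          have h5 := (Real.exp_pos (dgrad f star x y)).ne'
          field_simp
        rw [hratio, Real.log_mul (Real.exp_pos _).ne'
            (div_pos (hw x) (mul_pos hZ hM)).ne', Real.log_exp,
          Real.log_div (hw x).ne' (mul_pos hZ hM).ne', Real.log_mul hZ.ne' hM.ne']
        ring
      · simp
    have hKL1 : KL (condMeas μ c j) (ξ x)
        = ∑ y ∈ P j,
            μ y * ((f y - dgrad f star x y)
              + (Real.log (w x) - Real.log Z - Real.log (cellMass μ c j)))
              / cellMass μ c j := by
      unfold KL
      rw [Finset.sum_congr rfl fun y _ => hterm y]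
      simp only [hP_def]
      rw [Finset.sum_filter]
    rw [hKL1]
    have h1 : ∀ y ∈ P j,
        μ y * ((f y - dgrad f star x y)
          + (Real.log (w x) - Real.log Z - Real.log (cellMass μ c j)))
          / cellMass μ c j
        = μ y * (f y - dgrad f star x y) / cellMass μ c j
          + μ y * ((Real.log (w x) - Real.log Z - Real.log (cellMass μ c j))
              / cellMass μ c j) := fun y _ => by ring
    rw [Finset.sum_congr rfl h1, Finset.sum_add_distrib, ← Finset.sum_div,
      ← Finset.sum_mul, ← hMdef]
    congr 1
    rw [mul_div_cancel₀ _ hM.ne']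
  -- choice of centers
  have hsel : ∀ j : Fin m, ∃ x : ∀ i, K i, (P j).Nonempty →
      x ∈ P j ∧ ∀ x' ∈ P j,
        KL (condMeas μ c j) (ξ x) ≤ KL (condMeas μ c j) (ξ x') := by
    intro j
    by_cases h : (P j).Nonempty
    · obtain ⟨x, hx, hmin⟩ := Finset.exists_min_image (P j)
        (fun x => KL (condMeas μ c j) (ξ x)) h
      exact ⟨x, fun _ => ⟨hx, hmin⟩⟩
    · exact ⟨x₀, fun h' => absurd h' h⟩
  choose ctr hctr using hsel
  -- the per-cell estimate
  have hTj : ∀ j : Fin m,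
      cellMass μ c j * KL (condMeas μ c j) (ξ (ctr j))
        ≤ (∑ y ∈ P j, μ y * (f y - dgrad f star y y))
          + (∑ x ∈ P j, μ x * Real.log (w x))
          + δ' * cellMass μ c j
          - cellMass μ c j * Real.log Z
          - cellMass μ c j * Real.log (cellMass μ c j) := by
    intro j
    by_cases hne : (P j).Nonempty
    · have hM : 0 < cellMass μ c j := by
        rw [hMdef]; exact Finset.sum_pos (fun y _ => hμpos y) hne
      obtain ⟨hmem, hmin⟩ := hctr j hne
      have hbound : ∀ x ∈ P j,
          KL (condMeas μ c j) (ξ x)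
            ≤ (∑ y ∈ P j, μ y * (f y - dgrad f star y y)) / cellMass μ c j + δ'
              + Real.log (w x) - Real.log Z - Real.log (cellMass μ c j) := by
        intro x hx
        rw [hKLform j x hne]
        have hnum : (∑ y ∈ P j, μ y * (f y - dgrad f star x y))
            ≤ (∑ y ∈ P j, μ y * (f y - dgrad f star y y)) + cellMass μ c j * δ' := by
          have hle : ∀ y ∈ P j, μ y * (f y - dgrad f star x y)
              ≤ μ y * ((f y - dgrad f star y y) + δ') := by
            intro y hy
            refine mul_le_mul_of_nonneg_left ?_ (hμpos y).le
            have hcxy : c x = c y := by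
              rw [(hPmem j x).1 hx, (hPmem j y).1 hy]
            have := hpair x y hcxy
            linarith
          calc (∑ y ∈ P j, μ y * (f y - dgrad f star x y))
              ≤ ∑ y ∈ P j, μ y * ((f y - dgrad f star y y) + δ') :=
                Finset.sum_le_sum hle
            _ = (∑ y ∈ P j, μ y * (f y - dgrad f star y y))
                + (∑ y ∈ P j, μ y) * δ' := by
                rw [Finset.sum_congr rfl
                  (fun y _ => mul_add (μ y) (f y - dgrad f star y y) δ'),
                  Finset.sum_add_distrib, ← Finset.sum_mul]
            _ = (∑ y ∈ P j, μ y * (f y - dgrad f star y y))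
                + cellMass μ c j * δ' := by rw [← hMdef]
        have hdiv : (∑ y ∈ P j, μ y * (f y - dgrad f star x y)) / cellMass μ c j
            ≤ (∑ y ∈ P j, μ y * (f y - dgrad f star y y)) / cellMass μ c j + δ' := by
          have h2 : ((∑ y ∈ P j, μ y * (f y - dgrad f star y y)) + cellMass μ c j * δ')
              / cellMass μ c j
              = (∑ y ∈ P j, μ y * (f y - dgrad f star y y)) / cellMass μ c j + δ' := by
            rw [add_div, mul_div_cancel_left₀ _ hM.ne']
          rw [← h2]
          exact (div_le_div_iff_of_pos_right hM).mpr hnum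
        linarith
      have step1 : cellMass μ c j * KL (condMeas μ c j) (ξ (ctr j))
          ≤ ∑ x ∈ P j, μ x * KL (condMeas μ c j) (ξ x) := by
        rw [hMdef j, Finset.sum_mul]
        exact Finset.sum_le_sum fun x hx =>
          mul_le_mul_of_nonneg_left (hmin x hx) (hμpos x).le
      have step2 : ∑ x ∈ P j, μ x * KL (condMeas μ c j) (ξ x)
          ≤ ∑ x ∈ P j, μ x *
              ((∑ y ∈ P j, μ y * (f y - dgrad f star y y)) / cellMass μ c j + δ'
                + Real.log (w x) - Real.log Z - Real.log (cellMass μ c j)) :=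
        Finset.sum_le_sum fun x hx =>
          mul_le_mul_of_nonneg_left (hbound x hx) (hμpos x).le
      have step3 : ∑ x ∈ P j, μ x *
            ((∑ y ∈ P j, μ y * (f y - dgrad f star y y)) / cellMass μ c j + δ'
              + Real.log (w x) - Real.log Z - Real.log (cellMass μ c j))
          = (∑ y ∈ P j, μ y * (f y - dgrad f star y y))
            + (∑ x ∈ P j, μ x * Real.log (w x))
            + δ' * cellMass μ c j
            - cellMass μ c j * Real.log Z
            - cellMass μ c j * Real.log (cellMass μ c j) := by
        have h1 : ∀ x ∈ P j, μ x *
            ((∑ y ∈ P j, μ y * (f y - dgrad f star y y)) / cellMass μ c j + δ'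
              + Real.log (w x) - Real.log Z - Real.log (cellMass μ c j))
            = μ x * ((∑ y ∈ P j, μ y * (f y - dgrad f star y y)) / cellMass μ c j + δ'
                - Real.log Z - Real.log (cellMass μ c j))
              + μ x * Real.log (w x) := fun x _ => by ring
        rw [Finset.sum_congr rfl h1, Finset.sum_add_distrib, ← Finset.sum_mul, ← hMdef]
        have hMne := hM.ne'
        field_simp
        ring
      exact step1.trans (step2.trans (le_of_eq step3))
    · have hPe : P j = ∅ := Finset.not_nonempty_iff_eq_empty.1 hne
      have hM0 : cellMass μ c j = 0 := by rw [hMdef, hPe]; simp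
      rw [hM0, hPe]
      simp
  -- product-measure update identity
  have hprodupd : ∀ (x : ∀ i, K i) (i : Fin n) (u : K i),
      prodMeas l (Function.update x i u) * l i (x i) = prodMeas l x * l i u := by
    intro x i u
    unfold prodMeas
    rw [← Finset.mul_prod_erase Finset.univ
        (fun k => l k (Function.update x i u k)) (Finset.mem_univ i),
      ← Finset.mul_prod_erase Finset.univ (fun k => l k (x k)) (Finset.mem_univ i)]
    have herase : ∏ k ∈ Finset.univ.erase i, l k (Function.update x i u k)
        = ∏ k ∈ Finset.univ.erase i, l k (x k) := by
      refine Finset.prod_congr rfl fun k hk => ?_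
      rw [Function.update_of_ne (Finset.mem_erase.1 hk).1]
    rw [herase, Function.update_self]
    ring
  -- single-coordinate partition identity relating w and Usum
  have hfac : ∀ (x : ∀ i, K i) (i : Fin n),
      Real.log (∑ u, Real.exp (dpart f star i x u) * l i u)
        = Real.log (Usum ν {i} x) + Real.log (l i (x i)) - Real.log (prodMeas l x)
          - f (Function.update x i (star i)) := by
    intro x i
    have h1 : (∑ v, ν (Function.update x i v)) * l i (x i)
        = prodMeas l x * ∑ v, Real.exp (f (Function.update x i v)) * l i v := by
      rw [Finset.sum_mul, Finset.mul_sum]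
      refine Finset.sum_congr rfl fun v _ => ?_
      calc ν (Function.update x i v) * l i (x i)
          = Real.exp (f (Function.update x i v))
            * (prodMeas l (Function.update x i v) * l i (x i)) := by
            simp only [hν_def]; ring
        _ = Real.exp (f (Function.update x i v)) * (prodMeas l x * l i v) := by
            rw [hprodupd]
        _ = prodMeas l x * (Real.exp (f (Function.update x i v)) * l i v) := by ring
    have h2 : (∑ u, Real.exp (dpart f star i x u) * l i u)
        = (∑ u, Real.exp (f (Function.update x i u)) * l i u)
          / Real.exp (f (Function.update x i (star i))) := by
      rw [Finset.sum_div]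
      refine Finset.sum_congr rfl fun u _ => ?_
      unfold dpart
      rw [Real.exp_sub]
      ring
    have h3 : (∑ u, Real.exp (f (Function.update x i u)) * l i u)
        = Usum ν {i} x * l i (x i) / prodMeas l x := by
      rw [Usum_single]
      rw [eq_div_iff (hlam x).ne']
      linarith [h1]
    rw [h2, h3]
    rw [div_div]
    have hUpos : 0 < Usum ν {i} x := Usum_pos hν _ x
    rw [Real.log_div (mul_pos hUpos (hlpos i (x i))).ne'
        (mul_pos (hlam x) (Real.exp_pos _)).ne',
      Real.log_mul hUpos.ne' (hlpos i (x i)).ne',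
      Real.log_mul (hlam x).ne' (Real.exp_pos _).ne', Real.log_exp]
    ring
  -- pointwise Han identity
  have hptw : ∀ x : ∀ i, K i,
      f x - dgrad f star x x + Real.log (w x)
        = Real.log (ν x) + ∑ i, (Real.log (Usum ν {i} x) - Real.log (ν x)) := by
    intro x
    have hlogw : Real.log (w x)
        = ∑ i, Real.log (∑ u, Real.exp (dpart f star i x u) * l i u) := by
      rw [hw_def]
      exact Real.log_prod fun i _ => (hwfac x i).ne'
    have hdg : dgrad f star x x = ∑ i, (f x - f (Function.update x i (star i))) := by
      unfold dgrad dpart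
      refine Finset.sum_congr rfl fun i _ => ?_
      rw [Function.update_eq_self]
    have hlogν : Real.log (ν x) = f x + Real.log (prodMeas l x) := by
      simp only [hν_def]
      rw [Real.log_mul (Real.exp_pos _).ne' (hlam x).ne', Real.log_exp]
    have hloglam : Real.log (prodMeas l x) = ∑ i, Real.log (l i (x i)) := by
      unfold prodMeas
      exact Real.log_prod fun i _ => (hlpos i (x i)).ne'
    have hper : ∀ i : Fin n,
        (Real.log (Usum ν {i} x) + Real.log (l i (x i)) - Real.log (prodMeas l x)
          - f (Function.update x i (star i)))
          - (f x - f (Function.update x i (star i)))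
        = (Real.log (Usum ν {i} x) - Real.log (ν x)) + Real.log (l i (x i)) := by
      intro i
      rw [hlogν]
      ring
    rw [hlogw, hdg, Finset.sum_congr rfl fun i _ => hfac x i]
    calc f x - (∑ i, (f x - f (Function.update x i (star i))))
          + ∑ i, (Real.log (Usum ν {i} x) + Real.log (l i (x i))
              - Real.log (prodMeas l x) - f (Function.update x i (star i)))
        = f x + ((∑ i, (Real.log (Usum ν {i} x) + Real.log (l i (x i))
            - Real.log (prodMeas l x) - f (Function.update x i (star i))))
            - ∑ i, (f x - f (Function.update x i (star i)))) := by ring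
      _ = f x + ∑ i, ((Real.log (Usum ν {i} x) + Real.log (l i (x i))
            - Real.log (prodMeas l x) - f (Function.update x i (star i)))
            - (f x - f (Function.update x i (star i)))) := by
          rw [← Finset.sum_sub_distrib]
      _ = f x + ∑ i, ((Real.log (Usum ν {i} x) - Real.log (ν x))
            + Real.log (l i (x i))) := by
          rw [Finset.sum_congr rfl fun i _ => hper i]
      _ = f x + ((∑ i, (Real.log (Usum ν {i} x) - Real.log (ν x)))
            + ∑ i, Real.log (l i (x i))) := by
          rw [Finset.sum_add_distrib]
      _ = Real.log (ν x) + ∑ i, (Real.log (Usum ν {i} x) - Real.log (ν x)) := by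
          rw [← hloglam, hlogν]
          ring
  -- the Han inequality
  have hHan : ∑ x, μ x * (f x - dgrad f star x x + Real.log (w x)) ≤ Real.log Z := by
    have h := CorollaryAAux.han hν
    calc ∑ x, μ x * (f x - dgrad f star x x + Real.log (w x))
        = ∑ x, ν x / (∑ y, ν y) *
            (Real.log (ν x) + ∑ i, (Real.log (Usum ν {i} x) - Real.log (ν x))) := by
          refine Finset.sum_congr rfl fun x _ => ?_
          rw [hμx x, hptw x, hZ_def]
      _ ≤ Real.log (∑ y, ν y) := h
      _ = Real.log Z := by rw [hZ_def]
  -- entropy of the partition is at most log m ≤ εn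
  have hEnt : -∑ j, cellMass μ c j * Real.log (cellMass μ c j) ≤ ε * n := by
    have hmr : (0:ℝ) < m := by exact_mod_cast hm0
    have h1 : ∀ j : Fin m, cellMass μ c j - (m:ℝ)⁻¹
        ≤ cellMass μ c j * Real.log (cellMass μ c j * m) := by
      intro j
      have hq := sub_le_mul_log (hMnn j) (inv_pos.2 hmr)
      have hrwq : cellMass μ c j / (m:ℝ)⁻¹ = cellMass μ c j * m := by field_simp
      rwa [hrwq] at hq
    have h3 : ∀ j : Fin m, cellMass μ c j * Real.log (cellMass μ c j * m)
        = cellMass μ c j * Real.log (cellMass μ c j) + cellMass μ c j * Real.log m := by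
      intro j
      rcases (hMnn j).eq_or_lt with h | h
      · rw [← h]; simp
      · rw [Real.log_mul h.ne' hmr.ne']; ring
    have h4 := Finset.sum_le_sum fun j (_ : j ∈ Finset.univ) => h1 j
    rw [Finset.sum_congr rfl fun j _ => h3 j, Finset.sum_add_distrib,
      ← Finset.sum_mul, hMsum, one_mul, Finset.sum_sub_distrib, hMsum] at h4
    have h5 : ∑ _j : Fin m, (m:ℝ)⁻¹ = 1 := by
      rw [Finset.sum_const, Finset.card_univ, Fintype.card_fin, nsmul_eq_mul,
        mul_inv_cancel₀ hmr.ne']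
    rw [h5] at h4
    have h6 : Real.log m ≤ ε * n := by
      rw [Real.log_le_iff_le_exp hmr]
      exact hm
    linarith
  -- assemble
  refine ⟨m, c, fun j i => dpart f star i (ctr j), hm, ?_⟩
  have hgoalrw : ∀ j : Fin m,
      (fun z => ∏ i, gibbs (dpart f star i (ctr j)) (l i) (z i)) = ξ (ctr j) := by
    intro j
    rw [hξ_def]
  have hT : ∑ j, cellMass μ c j * KL (condMeas μ c j) (ξ (ctr j))
      ≤ (∑ y, μ y * (f y - dgrad f star y y)) + (∑ x, μ x * Real.log (w x)) + δ'
        - Real.log Z - ∑ j, cellMass μ c j * Real.log (cellMass μ c j) := by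
    calc ∑ j, cellMass μ c j * KL (condMeas μ c j) (ξ (ctr j))
        ≤ ∑ j, ((∑ y ∈ P j, μ y * (f y - dgrad f star y y))
            + (∑ x ∈ P j, μ x * Real.log (w x))
            + δ' * cellMass μ c j
            - cellMass μ c j * Real.log Z
            - cellMass μ c j * Real.log (cellMass μ c j)) :=
          Finset.sum_le_sum fun j _ => hTj j
      _ = (∑ y, μ y * (f y - dgrad f star y y)) + (∑ x, μ x * Real.log (w x)) + δ'
          - Real.log Z - ∑ j, cellMass μ c j * Real.log (cellMass μ c j) := by
          rw [Finset.sum_sub_distrib, Finset.sum_sub_distrib,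
            Finset.sum_add_distrib, Finset.sum_add_distrib,
            hfib (fun y => μ y * (f y - dgrad f star y y)),
            hfib (fun x => μ x * Real.log (w x)),
            ← Finset.mul_sum, ← Finset.sum_mul, hMsum, one_mul]
          ring
  have hhan2 : (∑ y, μ y * (f y - dgrad f star y y)) + (∑ x, μ x * Real.log (w x))
      ≤ Real.log Z := by
    have hsplit : ∑ x, μ x * (f x - dgrad f star x x + Real.log (w x))
        = (∑ y, μ y * (f y - dgrad f star y y)) + (∑ x, μ x * Real.log (w x)) := by
      rw [← Finset.sum_add_distrib]
      exact Finset.sum_congr rfl fun x _ => by ring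
    rw [hsplit] at hHan
    exact hHan
  have hfinal : ∑ j, cellMass μ c j * KL (condMeas μ c j) (ξ (ctr j)) < (ε + δ) * n := by
    have hrw : (ε + δ) * (n:ℝ) = ε * n + δ * n := by ring
    rw [hrw]
    linarith
  calc ∑ j, cellMass μ c j *
        KL (condMeas μ c j) (fun z => ∏ i, gibbs (dpart f star i (ctr j)) (l i) (z i))
      = ∑ j, cellMass μ c j * KL (condMeas μ c j) (ξ (ctr j)) := by
        refine Finset.sum_congr rfl fun j _ => ?_
        rw [hgoalrw j]
    _ < (ε + δ) * n := hfinal
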